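/- Let G be the group with presentation ⟨a₁, …, a_n, t | a₁^{l₁} = a₂^{r₁}, a₂^{l₂} = a₃^{r₂}, …, a_n^{l_n} = t a₁^{r_n} t^{-1}⟩ where n ≥ 2 and the integers L = l₁⋯l_n and R = r₁⋯r_n are coprime with all l_i, r_i nonzero. Then G is generated by t and a₁, and the relation t a₁^{R} t^{-1} = a₁^{L} holds in G; hence G is a quotient of the Baumslag–Solitar group BS(R, L). -/
import Mathlib


/-- The Baumslag–Solitar group `BS(m, n) = ⟨t, a | t aᵐ t⁻¹ = aⁿ⟩`, with `t` indexed by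
`true` and `a` by `false`. -/
abbrev BS (m n : ℤ) : Type :=
  PresentedGroup ({FreeGroup.of true * (FreeGroup.of false) ^ m * (FreeGroup.of true)⁻¹ *
    (FreeGroup.of false) ^ (-n)} : Set (FreeGroup Bool))

/-- Let `G` be the group presented by generators `a₁, …, a_n, t` (`n ≥ 2`) and relations
`a₁^{l₁} = a₂^{r₁}, …, a_{n-1}^{l_{n-1}} = a_n^{r_{n-1}}, a_n^{l_n} = t a₁^{r_n} t⁻¹`,
where all `lᵢ, rᵢ` are nonzero and `L = l₁⋯l_n`, `R = r₁⋯r_n` are coprime.  Then `G` is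
generated by `t` and `a₁`, the relation `t a₁^R t⁻¹ = a₁^L` holds, and hence `G` is
a quotient of `BS(R, L)`. -/
theorem circle_GBS_quotient_of_BS {G : Type} [Group G]
    (n : ℕ) (hn : 2 ≤ n) (a : Fin n → G) (t : G) (l r : Fin n → ℤ)
    (hl : ∀ i, l i ≠ 0) (hr : ∀ i, r i ≠ 0)
    (hcop : IsCoprime (∏ i, l i) (∏ i, r i))
    (hgen : Subgroup.closure (Set.range a ∪ {t}) = ⊤)
    (hrel : ∀ (i : Fin n) (h : (i : ℕ) + 1 < n),
      a i ^ l i = a ⟨(i : ℕ) + 1, h⟩ ^ r i)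
    (hlast : a ⟨n - 1, by omega⟩ ^ l ⟨n - 1, by omega⟩ =
      t * a ⟨0, by omega⟩ ^ r ⟨n - 1, by omega⟩ * t⁻¹) :
    Subgroup.closure ({t, a ⟨0, by omega⟩} : Set G) = ⊤ ∧
    t * a ⟨0, by omega⟩ ^ (∏ i, r i) * t⁻¹ = a ⟨0, by omega⟩ ^ (∏ i, l i) ∧
    ∃ f : BS (∏ i, r i) (∏ i, l i) →* G, Function.Surjective f := by
  have h0 : 0 < n := by omega
  set a0 : G := a ⟨0, h0⟩ with ha0
  -- extend l, r, a to ℕ-indexed families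
  set l' : ℕ → ℤ := fun j => if h : j < n then l ⟨j, h⟩ else 1 with hl'
  set r' : ℕ → ℤ := fun j => if h : j < n then r ⟨j, h⟩ else 1 with hr'
  have hLprod : (∏ i, l i) = ∏ j ∈ Finset.range n, l' j := by
    rw [← Fin.prod_univ_eq_prod_range]
    exact Finset.prod_congr rfl fun i _ => by simp [hl', i.isLt]
  have hRprod : (∏ i, r i) = ∏ j ∈ Finset.range n, r' j := by
    rw [← Fin.prod_univ_eq_prod_range]
    exact Finset.prod_congr rfl fun i _ => by simp [hr', i.isLt]
  -- forward lemma
  have lem1 : ∀ k (hk : k < n),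
      a ⟨k, hk⟩ ^ (∏ j ∈ Finset.range k, r' j) = a0 ^ (∏ j ∈ Finset.range k, l' j) := by
    intro k
    induction k with
    | zero => intro hk; simp [ha0]
    | succ k ih =>
      intro hk
      have hk' : k < n := by omega
      rw [Finset.prod_range_succ, Finset.prod_range_succ]
      have hrk : r' k = r ⟨k, hk'⟩ := by simp [hr', hk']
      have hlk : l' k = l ⟨k, hk'⟩ := by simp [hl', hk']
      calc a ⟨k + 1, hk⟩ ^ ((∏ j ∈ Finset.range k, r' j) * r' k)
          = (a ⟨k + 1, hk⟩ ^ r' k) ^ (∏ j ∈ Finset.range k, r' j) := by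
            rw [mul_comm, zpow_mul]
        _ = (a ⟨k, hk'⟩ ^ l' k) ^ (∏ j ∈ Finset.range k, r' j) := by
            rw [hrk, hlk, ← hrel ⟨k, hk'⟩ hk]
        _ = (a ⟨k, hk'⟩ ^ (∏ j ∈ Finset.range k, r' j)) ^ l' k := by
            rw [← zpow_mul, ← zpow_mul, mul_comm]
        _ = (a0 ^ (∏ j ∈ Finset.range k, l' j)) ^ l' k := by rw [ih hk']
        _ = a0 ^ ((∏ j ∈ Finset.range k, l' j) * l' k) := by rw [zpow_mul]
  -- backward lemma
  have lem2 : ∀ d k (hk : k < n), k + d + 1 = n →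
      a ⟨k, hk⟩ ^ (∏ j ∈ Finset.Ico k n, l' j)
        = t * a0 ^ (∏ j ∈ Finset.Ico k n, r' j) * t⁻¹ := by
    intro d
    induction d with
    | zero =>
      intro k hk hkn
      have : k = n - 1 := by omega
      subst this
      have hIco : Finset.Ico (n - 1) n = {n - 1} := by
        have : n = (n - 1) + 1 := by omega
        rw [this]; simp
      rw [hIco, Finset.prod_singleton, Finset.prod_singleton]
      have hln : l' (n - 1) = l ⟨n - 1, hk⟩ := by simp [hl', hk]
      have hrn : r' (n - 1) = r ⟨n - 1, hk⟩ := by simp [hr', hk]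
      rw [hln, hrn]
      exact hlast
    | succ d ih =>
      intro k hk hkn
      have hk1 : k + 1 < n := by omega
      have hltn : k < n := hk
      rw [Finset.prod_eq_prod_Ico_succ_bot hltn, Finset.prod_eq_prod_Ico_succ_bot hltn]
      have hrk : r' k = r ⟨k, hk⟩ := by simp [hr', hk]
      have hlk : l' k = l ⟨k, hk⟩ := by simp [hl', hk]
      calc a ⟨k, hk⟩ ^ (l' k * ∏ j ∈ Finset.Ico (k + 1) n, l' j)
          = (a ⟨k, hk⟩ ^ l' k) ^ (∏ j ∈ Finset.Ico (k + 1) n, l' j) := by rw [zpow_mul]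
        _ = (a ⟨k + 1, hk1⟩ ^ r' k) ^ (∏ j ∈ Finset.Ico (k + 1) n, l' j) := by
            rw [hlk, hrk, hrel ⟨k, hk⟩ hk1]
        _ = (a ⟨k + 1, hk1⟩ ^ (∏ j ∈ Finset.Ico (k + 1) n, l' j)) ^ r' k := by
            rw [← zpow_mul, ← zpow_mul, mul_comm]
        _ = (t * a0 ^ (∏ j ∈ Finset.Ico (k + 1) n, r' j) * t⁻¹) ^ r' k := by
            rw [ih (k + 1) hk1 (by omega)]
        _ = t * a0 ^ (r' k * ∏ j ∈ Finset.Ico (k + 1) n, r' j) * t⁻¹ := by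
            rw [conj_zpow, ← zpow_mul, mul_comm]
  -- the key relation
  have hIco0 : Finset.Ico 0 n = Finset.range n := by rw [Finset.range_eq_Ico]
  have key : t * a0 ^ (∏ i, r i) * t⁻¹ = a0 ^ (∏ i, l i) := by
    rw [hLprod, hRprod, ← hIco0]
    exact (lem2 (n - 1) 0 h0 (by omega)).symm
  -- generation
  have hmem : ∀ i : Fin n, a i ∈ Subgroup.closure ({t, a0} : Set G) := by
    intro i
    have htm : t ∈ Subgroup.closure ({t, a0} : Set G) :=
      Subgroup.subset_closure (by simp)
    have ham : a0 ∈ Subgroup.closure ({t, a0} : Set G) :=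
      Subgroup.subset_closure (by simp)
    have hi : (i : ℕ) < n := i.isLt
    have hdl : (∏ j ∈ Finset.Ico (i : ℕ) n, l' j) ∣ (∏ i, l i) := by
      rw [hLprod, ← hIco0]
      exact Finset.prod_dvd_prod_of_subset _ _ _ (Finset.Ico_subset_Ico (by omega) le_rfl)
    have hdr : (∏ j ∈ Finset.range (i : ℕ), r' j) ∣ (∏ i, r i) := by
      rw [hRprod]
      exact Finset.prod_dvd_prod_of_subset _ _ _ (Finset.range_subset_range.2 (by omega))
    have hcop' : IsCoprime (∏ j ∈ Finset.Ico (i : ℕ) n, l' j)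
        (∏ j ∈ Finset.range (i : ℕ), r' j) :=
      (hcop.of_isCoprime_of_dvd_left hdl).of_isCoprime_of_dvd_right hdr
    obtain ⟨u, v, huv⟩ := hcop'
    have hai : a i = a ⟨(i : ℕ), hi⟩ := by congr
    have e1 : a ⟨(i : ℕ), hi⟩ ^ (u * ∏ j ∈ Finset.Ico (i : ℕ) n, l' j)
        = (t * a0 ^ (∏ j ∈ Finset.Ico (i : ℕ) n, r' j) * t⁻¹) ^ u := by
      rw [mul_comm, zpow_mul, lem2 (n - 1 - (i : ℕ)) (i : ℕ) hi (by omega)]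
    have e2 : a ⟨(i : ℕ), hi⟩ ^ (v * ∏ j ∈ Finset.range (i : ℕ), r' j)
        = (a0 ^ (∏ j ∈ Finset.range (i : ℕ), l' j)) ^ v := by
      rw [mul_comm, zpow_mul, lem1 (i : ℕ) hi]
    have : a i = (t * a0 ^ (∏ j ∈ Finset.Ico (i : ℕ) n, r' j) * t⁻¹) ^ u *
        (a0 ^ (∏ j ∈ Finset.range (i : ℕ), l' j)) ^ v := by
      rw [hai, ← e1, ← e2, ← zpow_add, huv, zpow_one]
    rw [this]
    exact mul_mem (zpow_mem (mul_mem (mul_mem htm (zpow_mem ham _)) (inv_mem htm)) _)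
      (zpow_mem (zpow_mem ham _) _)
  have hcl : Subgroup.closure ({t, a0} : Set G) = ⊤ := by
    rw [← top_le_iff, ← hgen, Subgroup.closure_le]
    rintro x (⟨i, rfl⟩ | rfl)
    · exact hmem i
    · exact Subgroup.subset_closure (by simp)
  refine ⟨hcl, key, ?_⟩
  -- the quotient map
  set L : ℤ := ∏ i, l i
  set R : ℤ := ∏ i, r i
  have hF : ∀ x ∈ ({FreeGroup.of true * (FreeGroup.of false) ^ R * (FreeGroup.of true)⁻¹ *
      (FreeGroup.of false) ^ (-L)} : Set (FreeGroup Bool)),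
      (FreeGroup.lift (fun b => if b then t else a0)) x = 1 := by
    rintro x rfl
    simp only [map_mul, map_zpow, map_inv, FreeGroup.lift_apply_of, Bool.false_eq_true, if_true, if_false]
    rw [key, zpow_neg, mul_inv_cancel]
  refine ⟨PresentedGroup.toGroup hF, ?_⟩
  rw [← MonoidHom.range_eq_top, ← top_le_iff, ← hcl, Subgroup.closure_le]
  rintro x (rfl | rfl)
  · exact ⟨PresentedGroup.of true, by simp [PresentedGroup.toGroup.of]⟩
  · exact ⟨PresentedGroup.of false, by simp [PresentedGroup.toGroup.of]⟩
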